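/- arXiv:2111.01757 — 2 statements merged into one kernel-verified Lean document; each statement's English description precedes it below -/
import Mathlib

section
/- lim_{L→0⁺} lim_{ε→0⁺} (1/(2π√ε)) · ∫_ε^L ∫_ε^L (L₁ + L₂ + L₁L₂/ε)^{−3/2} dL₂ dL₁ = 1/3. -/
open MeasureTheory Filter

open Real in

lemma inner_int (ε L x : ℝ) (hε : 0 < ε) (hL : 0 < L) (hx : 0 < x) :
    ∫ y in ε..L, (x + y + x * y / ε) ^ (-(3:ℝ)/2)
      = (2 * ε / (ε + x)) * (1 / Real.sqrt (2*x+ε) - 1 / Real.sqrt (x + L + x*L/ε)) := by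
  set b : ℝ := 1 + x / ε with hb
  have hb0 : 0 < b := by positivity
  have hfe : ∀ y : ℝ, x + y + x * y / ε = x + b * y := by
    intro y; rw [hb]; ring
  have hpos : ∀ y ∈ Set.uIcc ε L, 0 < x + b * y := by
    intro y hy
    have hmin : min ε L ≤ y := hy.1
    have : 0 < y := lt_of_lt_of_le (lt_min hε hL) hmin
    positivity
  have hderiv : ∀ y ∈ Set.uIcc ε L,
      HasDerivAt (fun y => -(2/b) * (x + b * y) ^ (-(1:ℝ)/2)) ((x + b * y) ^ (-(3:ℝ)/2)) y := by
    intro y hy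
    have hp := hpos y hy
    have h1 : HasDerivAt (fun y : ℝ => x + b * y) b y := by
      simpa using ((hasDerivAt_id y).const_mul b).const_add x
    have h2 := h1.rpow_const (p := -(1:ℝ)/2) (Or.inl (ne_of_gt hp))
    have h3 := h2.const_mul (-(2/b))
    refine h3.congr_deriv ?_
    symm
    rw [show (-(1:ℝ)/2 - 1) = -(3:ℝ)/2 by norm_num] at *
    have : (x + b*y) ^ (-(1:ℝ)/2 - 1) = (x + b*y) ^ (-(3:ℝ)/2) := by norm_num
    field_simp
  have hint : IntervalIntegrable (fun y => (x + b * y) ^ (-(3:ℝ)/2)) volume ε L := by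
    apply ContinuousOn.intervalIntegrable
    apply ContinuousOn.rpow_const
    · fun_prop
    · intro y hy; exact Or.inl (ne_of_gt (hpos y hy))
  have := intervalIntegral.integral_eq_sub_of_hasDerivAt hderiv hint
  calc ∫ y in ε..L, (x + y + x * y / ε) ^ (-(3:ℝ)/2)
      = ∫ y in ε..L, (x + b * y) ^ (-(3:ℝ)/2) := by
        apply intervalIntegral.integral_congr; intro y hy; simp [hfe y]
    _ = -(2/b) * (x + b * L) ^ (-(1:ℝ)/2) - -(2/b) * (x + b * ε) ^ (-(1:ℝ)/2) := this
    _ = (2 * ε / (ε + x)) * (1 / Real.sqrt (2*x+ε) - 1 / Real.sqrt (x + L + x*L/ε)) := by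
        have e1 : x + b * ε = 2*x + ε := by rw [hb, add_mul, one_mul, div_mul_cancel₀ x hε.ne']; ring
        have e2 : x + b * L = x + L + x*L/ε := by rw [hb]; ring
        have p1 : (0:ℝ) < 2*x+ε := by positivity
        have p2 : (0:ℝ) < x + L + x*L/ε := by positivity
        rw [e1, e2]
        rw [show (-(1:ℝ)/2) = -(1/2 : ℝ) by norm_num,
          Real.rpow_neg p1.le, Real.rpow_neg p2.le, ← Real.sqrt_eq_rpow, ← Real.sqrt_eq_rpow]
        have hbe : b = (ε + x)/ε := by rw [hb, add_div, div_self hε.ne']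
        set S := Real.sqrt (2*x+ε) with hS
        set T := Real.sqrt (x + L + x*L/ε) with hT
        have hS0 : 0 < S := Real.sqrt_pos.mpr p1
        have hT0 : 0 < T := Real.sqrt_pos.mpr p2
        rw [hbe]
        field_simp
        ring

open Real in

lemma arctan_deriv (ε b c x : ℝ) (hε : 0 < ε) (hpos : 0 < b*x+c) :
    HasDerivAt (fun x => Real.arctan (Real.sqrt ((b*x+c)/ε)))
      (b * Real.sqrt ε / (2 * (ε + (b*x+c)) * Real.sqrt (b*x+c))) x := by
  have hu : HasDerivAt (fun x : ℝ => (b*x+c)/ε) (b/ε) x := by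
    simpa using (((hasDerivAt_id x).const_mul b).add_const c).div_const ε
  have hux : (0:ℝ) < (b*x+c)/ε := by positivity
  have hs := (hu.sqrt (ne_of_gt hux)).arctan
  convert hs using 1
  rw [Real.sqrt_div hpos.le]
  have hsq : Real.sqrt ((b*x+c)) ^ 2 = b*x+c := Real.sq_sqrt hpos.le
  have htq : Real.sqrt ε ^ 2 = ε := Real.sq_sqrt hε.le
  set s := Real.sqrt (b*x+c) with hsdef
  set t := Real.sqrt ε with htdef
  have hs0 : 0 < s := Real.sqrt_pos.mpr hpos
  have ht0 : 0 < t := Real.sqrt_pos.mpr hε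
  rw [← htq, ← hsq]
  field_simp

lemma outer_int (ε L : ℝ) (hε : 0 < ε) (hL : 0 < L) :
    ∫ x in ε..L, (2 * ε / (ε + x)) * (1 / Real.sqrt (2*x+ε) - 1 / Real.sqrt (x + L + x*L/ε))
      = (4 * Real.sqrt ε) * ((Real.arctan (Real.sqrt ((2*L+ε)/ε)) - Real.arctan (Real.sqrt ((L + L + L*L/ε)/ε)))
        - (Real.arctan (Real.sqrt ((2*ε+ε)/ε)) - Real.arctan (Real.sqrt ((ε + L + ε*L/ε)/ε)))) := by
  set K : ℝ → ℝ := fun x => (4 * Real.sqrt ε) *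
    (Real.arctan (Real.sqrt ((2*x+ε)/ε)) - Real.arctan (Real.sqrt ((x + L + x*L/ε)/ε))) with hK
  have hderiv : ∀ x ∈ Set.uIcc ε L,
      HasDerivAt K ((2 * ε / (ε + x)) * (1 / Real.sqrt (2*x+ε) - 1 / Real.sqrt (x + L + x*L/ε))) x := by
    intro x hx
    have hmin : min ε L ≤ x := hx.1
    have hx0 : 0 < x := lt_of_lt_of_le (lt_min hε hL) hmin
    have h1 := arctan_deriv ε 2 ε x hε (by positivity)
    have h2 := arctan_deriv ε (1 + L/ε) L x hε (by positivity)
    have hfe : ∀ y : ℝ, (1 + L/ε) * y + L = y + L + y*L/ε := by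
      intro y; field_simp; ring
    simp only [hfe] at h2
    have h3 := ((h1.sub h2).const_mul (4 * Real.sqrt ε))
    refine h3.congr_deriv ?_
    symm
    have p1 : (0:ℝ) < 2*x+ε := by positivity
    have p2 : (0:ℝ) < x + L + x*L/ε := by positivity
    have hsq : Real.sqrt (2*x+ε) ^ 2 = 2*x+ε := Real.sq_sqrt p1.le
    have hrq : Real.sqrt (x + L + x*L/ε) ^ 2 = x + L + x*L/ε := Real.sq_sqrt p2.le
    have htq : Real.sqrt ε ^ 2 = ε := Real.sq_sqrt hε.le
    set s := Real.sqrt (2*x+ε) with hsdef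
    set r := Real.sqrt (x + L + x*L/ε) with hrdef
    set t := Real.sqrt ε with htdef
    have hs0 : 0 < s := Real.sqrt_pos.mpr p1
    have hr0 : 0 < r := Real.sqrt_pos.mpr p2
    have ht0 : 0 < t := Real.sqrt_pos.mpr hε
    rw [← htq]
    field_simp
    ring
  have hint : IntervalIntegrable
      (fun x => (2 * ε / (ε + x)) * (1 / Real.sqrt (2*x+ε) - 1 / Real.sqrt (x + L + x*L/ε))) volume ε L := by
    apply ContinuousOn.intervalIntegrable
    have hxpos : ∀ x ∈ Set.uIcc ε L, 0 < x := fun x hx =>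
      lt_of_lt_of_le (lt_min hε hL) hx.1
    apply ContinuousOn.mul
    · exact ContinuousOn.div continuousOn_const (by fun_prop)
        (fun x hx => by have := hxpos x hx; positivity)
    · apply ContinuousOn.sub
      · exact ContinuousOn.div continuousOn_const (by fun_prop)
          (fun x hx => by have := hxpos x hx
                          have : (0:ℝ) < Real.sqrt (2*x+ε) := Real.sqrt_pos.mpr (by positivity)
                          positivity)
      · exact ContinuousOn.div continuousOn_const (by fun_prop)
          (fun x hx => by have h := hxpos x hx
                          have : (0:ℝ) < Real.sqrt (x + L + x*L/ε) := Real.sqrt_pos.mpr (by positivity)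
                          positivity)
  have := intervalIntegral.integral_eq_sub_of_hasDerivAt hderiv hint
  rw [this, hK]
  ring

open Real in
theorem stmt15 :
    ∃ h : ℝ → ℝ,
      (∀ L : ℝ, 0 < L →
        Tendsto (fun ε : ℝ =>
            (1 / (2 * Real.pi * Real.sqrt ε)) *
              ∫ L₁ in ε..L, ∫ L₂ in ε..L,
                (L₁ + L₂ + L₁ * L₂ / ε) ^ (-(3:ℝ)/2))
          (nhdsWithin 0 (Set.Ioi 0)) (nhds (h L))) ∧
      Tendsto h (nhdsWithin 0 (Set.Ioi 0)) (nhds (1 / 3)) := by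
  refine ⟨fun _ => 1/3, fun L hL => ?_, tendsto_const_nhds⟩
  have hsqrt_top : Tendsto Real.sqrt atTop atTop :=
    (tendsto_rpow_atTop (by norm_num : (0:ℝ) < 1/2)).congr
      (fun x => (Real.sqrt_eq_rpow x).symm)
  have harct : Tendsto (fun u : ℝ => Real.arctan (Real.sqrt u)) atTop (nhds (π/2)) :=
    (Real.tendsto_arctan_atTop.mono_right nhdsWithin_le_nhds).comp hsqrt_top
  have hbase : Tendsto (fun ε : ℝ => 2*L*ε⁻¹) (nhdsWithin 0 (Set.Ioi 0)) atTop :=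
    tendsto_inv_nhdsGT_zero.const_mul_atTop (by positivity)
  -- limits of the three divergent arguments
  have t1 : Tendsto (fun ε : ℝ => (2*L+ε)/ε) (nhdsWithin 0 (Set.Ioi 0)) atTop := by
    apply tendsto_atTop_mono' _ ?_ hbase
    filter_upwards [self_mem_nhdsWithin] with ε (hε : 0 < ε)
    rw [div_eq_mul_inv, add_mul]
    nlinarith [mul_pos hε (inv_pos.mpr hε), mul_inv_cancel₀ (ne_of_gt hε)]
  have t2 : Tendsto (fun ε : ℝ => (L + L + L*L/ε)/ε) (nhdsWithin 0 (Set.Ioi 0)) atTop := by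
    apply tendsto_atTop_mono' _ ?_ hbase
    filter_upwards [self_mem_nhdsWithin] with ε (hε : 0 < ε)
    have h1 : 0 < L*L/ε := by positivity
    rw [div_eq_mul_inv]
    have : 2*L*ε⁻¹ = (L+L)*ε⁻¹ := by ring
    rw [this]
    have := inv_pos.mpr hε
    nlinarith
  have t3 : Tendsto (fun ε : ℝ => (ε + L + ε*L/ε)/ε) (nhdsWithin 0 (Set.Ioi 0)) atTop := by
    apply tendsto_atTop_mono' _ ?_ hbase
    filter_upwards [self_mem_nhdsWithin] with ε (hε : 0 < ε)
    rw [mul_comm ε L, mul_div_assoc, div_self (ne_of_gt hε), mul_one, div_eq_mul_inv]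
    have := inv_pos.mpr hε
    nlinarith [mul_pos hε this]
  have a1 := harct.comp t1
  have a2 := harct.comp t2
  have a3 := harct.comp t3
  have aconst : Tendsto (fun ε : ℝ => Real.arctan (Real.sqrt ((2*ε+ε)/ε)))
      (nhdsWithin 0 (Set.Ioi 0)) (nhds (π/3)) := by
    have h3 : Real.arctan (Real.sqrt 3) = π/3 := by
      rw [← Real.tan_pi_div_three]
      exact Real.arctan_tan (by linarith [Real.pi_pos]) (by linarith [Real.pi_pos])
    refine Tendsto.congr' ?_ tendsto_const_nhds
    filter_upwards [self_mem_nhdsWithin] with ε (hε : 0 < ε)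
    rw [show (2*ε+ε)/ε = 3 by field_simp; ring]
    exact h3.symm
  -- combined limit of the closed form
  have hcomb : Tendsto (fun ε : ℝ => (2/π) *
      ((Real.arctan (Real.sqrt ((2*L+ε)/ε)) - Real.arctan (Real.sqrt ((L + L + L*L/ε)/ε)))
        - (Real.arctan (Real.sqrt ((2*ε+ε)/ε)) - Real.arctan (Real.sqrt ((ε + L + ε*L/ε)/ε)))))
      (nhdsWithin 0 (Set.Ioi 0)) (nhds (1/3)) := by
    have := (((a1.sub a2).sub (aconst.sub a3)).const_mul (2/π))
    convert this using 2
    · rfl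
    have hπ := Real.pi_pos
    field_simp
    ring
  apply hcomb.congr'
  filter_upwards [self_mem_nhdsWithin] with ε (hε : 0 < ε)
  have hstep1 : (∫ L₁ in ε..L, ∫ L₂ in ε..L, (L₁ + L₂ + L₁ * L₂ / ε) ^ (-(3:ℝ)/2))
      = ∫ x in ε..L, (2 * ε / (ε + x)) * (1 / Real.sqrt (2*x+ε) - 1 / Real.sqrt (x + L + x*L/ε)) := by
    apply intervalIntegral.integral_congr
    intro x hx
    have hx0 : 0 < x := lt_of_lt_of_le (lt_min hε hL) hx.1
    exact inner_int ε L x hε hL hx0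
  rw [hstep1, outer_int ε L hε hL]
  set X := ((Real.arctan (Real.sqrt ((2*L+ε)/ε)) - Real.arctan (Real.sqrt ((L + L + L*L/ε)/ε)))
        - (Real.arctan (Real.sqrt ((2*ε+ε)/ε)) - Real.arctan (Real.sqrt ((ε + L + ε*L/ε)/ε)))) with hX
  have ht0 : (0:ℝ) < Real.sqrt ε := Real.sqrt_pos.mpr hε
  have hπ := Real.pi_pos
  rw [eq_comm]
  field_simp
  ring
end

section
/- Let g be a finite-dimensional Lie algebra over a field of characteristic zero with basis {t^a} and structure constants [t^a, t^b] = Σ_c f^{ab}_c t^c. Let Cl be the associative unital ℤ/2-graded algebra with odd generators e^a (one for each basis element of g) and e_a (one for each dual basis element of g*) subject to the relations e^a e^b + e^b e^a = 0, e_a e_b + e_b e_a = 0, and e^a e_b + e_b e^a = 2δ^a_b. Set Ω = Σ_{a,b,c} f^{ab}_c · e_a e_b e^c, an odd element. Then Ω² lies in the center of Cl; consequently the odd super-derivation D(x) = Ωx − (−1)^{|x|} xΩ satisfies D² = 0. -/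
/-- The structure constants of a Lie algebra with respect to a chosen basis:
`[t^a, t^b] = Σ_c f^{ab}_c t^c`. -/
noncomputable def structureConstants {K : Type*} [Field K]
    {g : Type*} [LieRing g] [LieAlgebra K g]
    {ι : Type*} (bV : Module.Basis ι K g) : ι → ι → ι → K :=
  fun a b c => (bV.repr ⁅bV a, bV b⁆) c

/-- The odd BRST-type element `Ω = Σ_{a,b,c} f^{ab}_c · e_a e_b e^c` built from odd
generators `e^a = E a` and `e_a = Ed a` in an associative algebra. -/
noncomputable def brstCharge {K : Type*} [Field K] {ι : Type*} [Fintype ι]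
    {A : Type*} [Ring A] [Algebra K A]
    (f : ι → ι → ι → K) (E Ed : ι → A) : A :=
  ∑ a, ∑ b, ∑ c, f a b c • (Ed a * Ed b * E c)


lemma repr_lie_basis {K : Type*} [Field K] {g : Type*} [LieRing g] [LieAlgebra K g]
    {ι : Type*} [Fintype ι] [DecidableEq ι] (bV : Module.Basis ι K g) (x : g) (q r : ι) :
    bV.repr ⁅x, bV q⁆ r = ∑ c, bV.repr x c * bV.repr ⁅bV c, bV q⁆ r := by
  have h : (⟨⟨fun x => bV.repr ⁅x, bV q⁆ r, by intro u v; simp [add_lie]⟩,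
      by intro m u; simp [smul_lie]⟩ : g →ₗ[K] K)
      = ⟨⟨fun x => ∑ c, bV.repr x c * bV.repr ⁅bV c, bV q⁆ r, by
          intro u v; simp [map_add, add_mul, Finset.sum_add_distrib]⟩, by
          intro m u; simp [Finset.mul_sum, mul_assoc]⟩ := by
    apply bV.ext
    intro d
    simp [Module.Basis.repr_self, Finsupp.single_apply, ite_mul, Finset.sum_ite_eq]
  exact congrArg (fun φ : g →ₗ[K] K => φ x) h

lemma sc_skew {K : Type*} [Field K] {g : Type*} [LieRing g] [LieAlgebra K g]
    {ι : Type*} (bV : Module.Basis ι K g) (a b c : ι) :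
    structureConstants bV a b c = - structureConstants bV b a c := by
  unfold structureConstants
  rw [← lie_skew, map_neg]
  simp

lemma sc_jacobi {K : Type*} [Field K] {g : Type*} [LieRing g] [LieAlgebra K g]
    {ι : Type*} [Fintype ι] [DecidableEq ι] (bV : Module.Basis ι K g) (a b q r : ι) :
    ∑ c, (structureConstants bV a b c * structureConstants bV c q r
      + structureConstants bV b q c * structureConstants bV c a r
      + structureConstants bV q a c * structureConstants bV c b r) = 0 := by
  have key : ∀ x y z : g, ⁅⁅x, y⁆, z⁆ + ⁅⁅y, z⁆, x⁆ + ⁅⁅z, x⁆, y⁆ = 0 := by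
    intro x y z
    have h := lie_jacobi x y z
    have e : ∀ u v : g, ⁅u, v⁆ = -⁅v, u⁆ := by
      intro u v; rw [← lie_skew v u, neg_neg]
    rw [e ⁅x, y⁆ z, e ⁅y, z⁆ x, e ⁅z, x⁆ y]
    simp only [← neg_add, neg_eq_zero]
    rw [add_rotate]; exact h
  rw [Finset.sum_add_distrib, Finset.sum_add_distrib]
  unfold structureConstants
  rw [← repr_lie_basis bV ⁅bV a, bV b⁆ q r, ← repr_lie_basis bV ⁅bV b, bV q⁆ a r,
    ← repr_lie_basis bV ⁅bV q, bV a⁆ b r]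
  have h0 : bV.repr (⁅⁅bV a, bV b⁆, bV q⁆ + ⁅⁅bV b, bV q⁆, bV a⁆ + ⁅⁅bV q, bV a⁆, bV b⁆) r = 0 := by
    rw [key]; simp
  simpa [map_add] using h0

section Helpers

lemma sum_ite_pull {β M : Type*} [Fintype β] [AddCommMonoid M] (P : Prop) [Decidable P]
    (f : β → M) : (∑ x, if P then f x else 0) = if P then ∑ x, f x else 0 := by
  split <;> simp

lemma half_smul (K : Type*) [Field K] [CharZero K] {A : Type*} [AddCommGroup A] [Module K A]
    (x : A) (h : x + x = 0) : x = 0 := by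
  have h2 : (2 : K) • x = 0 := by rw [two_smul]; exact h
  have h3 := congrArg (fun y => ((2:K)⁻¹) • y) h2
  simpa [smul_smul, inv_mul_cancel₀ (two_ne_zero (α := K))] using h3

lemma third_smul (K : Type*) [Field K] [CharZero K] {A : Type*} [AddCommGroup A] [Module K A]
    (x : A) (h : x + x + x = 0) : x = 0 := by
  have h2 : (3 : K) • x = 0 := by
    rw [show (3:K) = 1 + 1 + 1 by norm_num, add_smul, add_smul, one_smul]; exact h
  have h3 := congrArg (fun y => ((3:K)⁻¹) • y) h2
  simpa [smul_smul, inv_mul_cancel₀ (by norm_num : (3:K) ≠ 0)] using h3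

lemma sum_reorder5 {ι M : Type*} [Fintype ι] [AddCommMonoid M] (G : ι → ι → ι → ι → ι → M) :
    (∑ a, ∑ b, ∑ c, ∑ q, ∑ r, G a b c q r) = ∑ a, ∑ b, ∑ q, ∑ r, ∑ c, G a b c q r :=
  Finset.sum_congr rfl fun a _ => Finset.sum_congr rfl fun b _ => by
    rw [Finset.sum_comm]; exact Finset.sum_congr rfl fun q _ => Finset.sum_comm

def cyc3 {ι : Type*} : ι × ι × ι ≃ ι × ι × ι where
  toFun u := (u.2.1, u.2.2, u.1)
  invFun u := (u.2.2, u.1, u.2.1)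
  left_inv := by rintro ⟨a, b, c⟩; rfl
  right_inv := by rintro ⟨a, b, c⟩; rfl

noncomputable def Qfun {K : Type*} [Field K] {ι : Type*} [Fintype ι]
    {A : Type*} [Ring A] [Algebra K A] (f : ι → ι → ι → K) (E Ed : ι → A)
    (u : ι × ι × ι) : A :=
  ∑ r, (∑ c, f u.1 u.2.1 c * f c u.2.2 r) • (Ed u.1 * (Ed u.2.1 * (Ed u.2.2 * E r)))

lemma Q_zero {K : Type*} [Field K] [CharZero K] {ι : Type*} [Fintype ι] [DecidableEq ι]
    {A : Type*} [Ring A] [Algebra K A] (f : ι → ι → ι → K) (E Ed : ι → A)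
    (hjac : ∀ a b q r, ∑ c, (f a b c * f c q r + f b q c * f c a r + f q a c * f c b r) = 0)
    (hM : ∀ a b q r, Ed a * (Ed b * (Ed q * E r)) = Ed b * (Ed q * (Ed a * E r))) :
    (∑ u : ι × ι × ι, Qfun f E Ed u) = 0 := by
  apply third_smul K
  have h1 : (∑ u : ι × ι × ι, Qfun f E Ed u) = ∑ u : ι × ι × ι, Qfun f E Ed (cyc3 u) :=
    (Fintype.sum_equiv cyc3 (fun u => Qfun f E Ed (cyc3 u)) (fun u => Qfun f E Ed u)
      (fun u => rfl)).symm
  have h2 : (∑ u : ι × ι × ι, Qfun f E Ed u) = ∑ u : ι × ι × ι, Qfun f E Ed (cyc3 (cyc3 u)) := by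
    rw [h1]
    exact (Fintype.sum_equiv cyc3 (fun u => Qfun f E Ed (cyc3 (cyc3 u)))
      (fun u => Qfun f E Ed (cyc3 u)) (fun u => rfl)).symm
  have e : (∑ u : ι × ι × ι, Qfun f E Ed u) + (∑ u : ι × ι × ι, Qfun f E Ed u)
      + (∑ u : ι × ι × ι, Qfun f E Ed u)
      = ∑ u : ι × ι × ι, (Qfun f E Ed u + Qfun f E Ed (cyc3 u) + Qfun f E Ed (cyc3 (cyc3 u))) := by
    rw [Finset.sum_add_distrib, Finset.sum_add_distrib, ← h1, ← h2]
  rw [e]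
  apply Finset.sum_eq_zero
  rintro ⟨a, b, q⟩ -
  show Qfun f E Ed (a, b, q) + Qfun f E Ed (b, q, a) + Qfun f E Ed (q, a, b) = 0
  unfold Qfun
  simp only
  rw [← Finset.sum_add_distrib, ← Finset.sum_add_distrib]
  apply Finset.sum_eq_zero
  intro r _
  rw [← hM a b q r, ← hM b q a r, ← hM a b q r]
  rw [← add_smul, ← add_smul, ← Finset.sum_add_distrib, ← Finset.sum_add_distrib, hjac, zero_smul]

end Helpers

lemma S3_zero {K : Type*} [Field K] [CharZero K] {ι : Type*} [Fintype ι] [DecidableEq ι]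
    {A : Type*} [Ring A] [Algebra K A] (f : ι → ι → ι → K) (E Ed : ι → A)
    (hNswap : ∀ a b c p q r : ι,
      Ed p * (Ed q * (Ed a * (Ed b * (E r * E c))))
        = -(Ed a * (Ed b * (Ed p * (Ed q * (E c * E r)))))) :
    (∑ σ : ι × ι × ι, ∑ τ : ι × ι × ι,
      (f σ.1 σ.2.1 σ.2.2 * f τ.1 τ.2.1 τ.2.2) •
        (Ed σ.1 * (Ed σ.2.1 * (Ed τ.1 * (Ed τ.2.1 * (E σ.2.2 * E τ.2.2)))))) = 0 := by
  have hpt : ∀ σ τ : ι × ι × ι,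
      (f τ.1 τ.2.1 τ.2.2 * f σ.1 σ.2.1 σ.2.2) •
        (Ed τ.1 * (Ed τ.2.1 * (Ed σ.1 * (Ed σ.2.1 * (E τ.2.2 * E σ.2.2)))))
      = -((f σ.1 σ.2.1 σ.2.2 * f τ.1 τ.2.1 τ.2.2) •
        (Ed σ.1 * (Ed σ.2.1 * (Ed τ.1 * (Ed τ.2.1 * (E σ.2.2 * E τ.2.2)))))) := by
    intro σ τ
    rw [hNswap σ.1 σ.2.1 σ.2.2 τ.1 τ.2.1 τ.2.2, smul_neg, mul_comm]
  apply half_smul K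
  have e1 : (∑ σ : ι × ι × ι, ∑ τ : ι × ι × ι,
      (f σ.1 σ.2.1 σ.2.2 * f τ.1 τ.2.1 τ.2.2) •
        (Ed σ.1 * (Ed σ.2.1 * (Ed τ.1 * (Ed τ.2.1 * (E σ.2.2 * E τ.2.2))))))
      = -(∑ σ : ι × ι × ι, ∑ τ : ι × ι × ι,
      (f σ.1 σ.2.1 σ.2.2 * f τ.1 τ.2.1 τ.2.2) •
        (Ed σ.1 * (Ed σ.2.1 * (Ed τ.1 * (Ed τ.2.1 * (E σ.2.2 * E τ.2.2)))))) := by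
    conv_lhs => rw [Finset.sum_comm]
    rw [Finset.sum_congr rfl fun τ _ => Finset.sum_congr rfl fun σ _ => hpt τ σ]
    simp
  rw [eq_neg_iff_add_eq_zero] at e1
  exact e1

lemma omega_sq_eq_zero {K : Type*} [Field K] [CharZero K] {ι : Type*} [Fintype ι] [DecidableEq ι]
    {A : Type*} [Ring A] [Algebra K A]
    (f : ι → ι → ι → K) (E Ed : ι → A)
    (hskew : ∀ a b c, f a b c = - f b a c)
    (hjac : ∀ a b q r, ∑ c, (f a b c * f c q r + f b q c * f c a r + f q a c * f c b r) = 0)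
    (hEE : ∀ a b, E a * E b + E b * E a = 0)
    (hEdEd : ∀ a b, Ed a * Ed b + Ed b * Ed a = 0)
    (hEEd : ∀ a b, E a * Ed b + Ed b * E a = if a = b then (2 : A) else 0) :
    brstCharge f E Ed * brstCharge f E Ed = 0 := by
  have hEds : ∀ x y, Ed x * Ed y = -(Ed y * Ed x) := fun x y =>
    eq_neg_of_add_eq_zero_left (hEdEd x y)
  have hEs : ∀ x y, E x * E y = -(E y * E x) := fun x y =>
    eq_neg_of_add_eq_zero_left (hEE x y)
  have swapEd : ∀ x y (z : A), Ed x * (Ed y * z) = -(Ed y * (Ed x * z)) := by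
    intro x y z
    rw [← mul_assoc, hEds x y, neg_mul, mul_assoc]
  have h1 : ∀ c p, E c * Ed p = (if c = p then (2:K) else 0) • (1:A) - Ed p * E c := by
    intro c p
    have h := eq_sub_of_add_eq (hEEd c p)
    rw [h]
    congr 1
    split <;> simp [two_smul, one_add_one_eq_two]
  have inner : ∀ c p q r, E c * (Ed p * (Ed q * E r))
      = (if c = p then (2:K) else 0) • (Ed q * E r)
        - (if c = q then (2:K) else 0) • (Ed p * E r)
        + Ed p * (Ed q * (E c * E r)) := by
    intro c p q r
    rw [← mul_assoc, h1 c p, sub_mul, smul_mul_assoc, one_mul]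
    rw [mul_assoc (Ed p), ← mul_assoc (E c), h1 c q, sub_mul, smul_mul_assoc, one_mul]
    rw [mul_sub, mul_smul_comm]
    rw [mul_assoc (Ed q) (E c) (E r)]
    abel
  have key : ∀ a b c p q r : ι, (Ed a * Ed b * E c) * (Ed p * Ed q * E r)
      = (if c = p then (2:K) else 0) • (Ed a * (Ed b * (Ed q * E r)))
        - (if c = q then (2:K) else 0) • (Ed a * (Ed b * (Ed p * E r)))
        + Ed a * (Ed b * (Ed p * (Ed q * (E c * E r)))) := by
    intro a b c p q r
    have e1 : (Ed a * Ed b * E c) * (Ed p * Ed q * E r)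
        = Ed a * (Ed b * (E c * (Ed p * (Ed q * E r)))) := by
      simp [mul_assoc]
    rw [e1, inner]
    simp only [mul_add, mul_sub, mul_smul_comm]
  have Mcyc : ∀ a b q r : ι, Ed a * (Ed b * (Ed q * E r)) = Ed b * (Ed q * (Ed a * E r)) := by
    intro a b q r
    rw [swapEd a b, swapEd a q]
    simp [mul_neg, neg_neg]
  have hNswap : ∀ a b c p q r : ι,
      Ed p * (Ed q * (Ed a * (Ed b * (E r * E c))))
        = -(Ed a * (Ed b * (Ed p * (Ed q * (E c * E r))))) := by
    intro a b c p q r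
    rw [hEs r c]
    simp only [swapEd q a, mul_neg, neg_neg]
    simp only [swapEd p a, mul_neg, neg_neg]
    simp only [swapEd q b, mul_neg, neg_neg]
    simp only [swapEd p b, mul_neg, neg_neg]
  have hQ : (∑ u : ι × ι × ι, Qfun f E Ed u) = 0 := Q_zero f E Ed hjac Mcyc
  -- the three pieces
  have hS1 : (∑ a, ∑ b, ∑ c, ∑ p, ∑ q, ∑ r,
      (f a b c * f p q r * if c = p then (2:K) else 0) • (Ed a * (Ed b * (Ed q * E r)))) = 0 := by
    simp_rw [mul_ite, mul_zero, ite_smul, zero_smul, sum_ite_pull, Finset.sum_ite_eq,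
      Finset.mem_univ, if_true]
    rw [sum_reorder5]
    have hco : ∀ a b c q r : ι, f a b c * f c q r * 2 = 2 * (f a b c * f c q r) := by
      intro a b c q r; ring
    have hco2 : ∀ (y : K) (m : A), ((2:K) * y) • m = (2:K) • (y • m) := fun y m => mul_smul 2 y m
    simp_rw [hco, hco2, ← Finset.smul_sum, ← Finset.sum_smul]
    have flat : (∑ a, ∑ b, ∑ q, ∑ r, (∑ c, f a b c * f c q r) • (Ed a * (Ed b * (Ed q * E r))))
        = ∑ u : ι × ι × ι, Qfun f E Ed u := by
      simp [Qfun, Fintype.sum_prod_type]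
    rw [flat, hQ, smul_zero]
  have hS2 : (∑ a, ∑ b, ∑ c, ∑ p, ∑ q, ∑ r,
      (f a b c * f p q r * if c = q then (2:K) else 0) • (Ed a * (Ed b * (Ed p * E r)))) = 0 := by
    simp_rw [mul_ite, mul_zero, ite_smul, zero_smul, sum_ite_pull, Finset.sum_ite_eq,
      Finset.mem_univ, if_true]
    rw [sum_reorder5]
    have hco : ∀ a b c p r : ι, f a b c * f p c r * 2 = (-2) * (f a b c * f c p r) := by
      intro a b c p r; rw [hskew p c]; ring
    have hco2 : ∀ (y : K) (m : A), ((-2:K) * y) • m = (-2:K) • (y • m) := fun y m => mul_smul (-2) y m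
    simp_rw [hco, hco2, ← Finset.smul_sum, ← Finset.sum_smul]
    have flat : (∑ a, ∑ b, ∑ p, ∑ r, (∑ c, f a b c * f c p r) • (Ed a * (Ed b * (Ed p * E r))))
        = ∑ u : ι × ι × ι, Qfun f E Ed u := by
      simp [Qfun, Fintype.sum_prod_type]
    rw [flat, hQ, smul_zero]
  have hS3 : (∑ a, ∑ b, ∑ c, ∑ p, ∑ q, ∑ r,
      (f a b c * f p q r) • (Ed a * (Ed b * (Ed p * (Ed q * (E c * E r)))))) = 0 := by
    have flat : (∑ a, ∑ b, ∑ c, ∑ p, ∑ q, ∑ r,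
        (f a b c * f p q r) • (Ed a * (Ed b * (Ed p * (Ed q * (E c * E r))))))
        = ∑ σ : ι × ι × ι, ∑ τ : ι × ι × ι,
            (f σ.1 σ.2.1 σ.2.2 * f τ.1 τ.2.1 τ.2.2) •
              (Ed σ.1 * (Ed σ.2.1 * (Ed τ.1 * (Ed τ.2.1 * (E σ.2.2 * E τ.2.2))))) := by
      simp [Fintype.sum_prod_type]
    rw [flat]
    exact S3_zero f E Ed hNswap
  rw [brstCharge]
  simp_rw [Finset.sum_mul, Finset.mul_sum, smul_mul_assoc, mul_smul_comm, smul_smul, key,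
    smul_add, smul_sub, smul_smul, Finset.sum_add_distrib, Finset.sum_sub_distrib]
  rw [hS1, hS2, hS3]
  simp

theorem stmt16 {K : Type*} [Field K] [CharZero K]
    {g : Type*} [LieRing g] [LieAlgebra K g] [FiniteDimensional K g]
    {ι : Type*} [Fintype ι] [DecidableEq ι] (bV : Module.Basis ι K g)
    {A : Type*} [Ring A] [Algebra K A]
    (E Ed : ι → A)
    -- Clifford-type relations among the odd generators:
    (hEE : ∀ a b, E a * E b + E b * E a = 0)
    (hEdEd : ∀ a b, Ed a * Ed b + Ed b * Ed a = 0)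
    (hEEd : ∀ a b, E a * Ed b + Ed b * E a = if a = b then (2 : A) else 0) :
    -- Ω² is central
    (∀ x : A,
      (brstCharge (structureConstants bV) E Ed) ^ 2 * x
        = x * (brstCharge (structureConstants bV) E Ed) ^ 2) ∧
    -- consequently the odd super-derivation D(x) = Ωx − (−1)^{|x|} xΩ squares to zero:
    -- for x of parity ε (ε = ±1), D²(x) = Ω·(Ωx − ε xΩ) + ε (Ωx − ε xΩ)·Ω = 0
    (∀ (x : A) (ε : K), (ε = 1 ∨ ε = -1) →
      (brstCharge (structureConstants bV) E Ed) *
          ((brstCharge (structureConstants bV) E Ed) * x -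
            ε • (x * (brstCharge (structureConstants bV) E Ed)))
        + ε • (((brstCharge (structureConstants bV) E Ed) * x -
            ε • (x * (brstCharge (structureConstants bV) E Ed))) *
              (brstCharge (structureConstants bV) E Ed)) = 0) := by
  have hΩ : brstCharge (structureConstants bV) E Ed * brstCharge (structureConstants bV) E Ed = 0 :=
    omega_sq_eq_zero _ E Ed (sc_skew bV) (sc_jacobi bV) hEE hEdEd hEEd
  constructor
  · intro x
    rw [sq, hΩ, zero_mul, mul_zero]
  · intro x ε hε
    have hε2 : ε * ε = 1 := by rcases hε with h | h <;> simp [h]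
    simp only [mul_sub, sub_mul, smul_sub, mul_smul_comm, smul_mul_assoc, smul_smul, hε2,
      one_smul, ← mul_assoc, hΩ, zero_mul]
    simp [mul_assoc, hΩ]
end
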